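/- For every x > 0, the derivative of the limiting mean-field monomer-dimer pressure p satisfies x·p′(x) = g(x), where p(x) = −(1−g(x))/2 − (1/2)log(1−g(x)) and g(x) = (√(x⁴+4x²) − x²)/2. -/

import Mathlib

noncomputable def gMD (x : ℝ) : ℝ := (Real.sqrt (x ^ 4 + 4 * x ^ 2) - x ^ 2) / 2

noncomputable def pMD (x : ℝ) : ℝ :=
  -(1 - gMD x) / 2 - (1 / 2) * Real.log (1 - gMD x)

/-- for every `x > 0`, `p` is differentiable at `x` with derivative
`p′(x)` satisfying `x·p′(x) = g(x)`. -/
theorem stmt9 (x : ℝ) (hx : 0 < x) :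
    ∃ d : ℝ, HasDerivAt pMD d x ∧ x * d = gMD x := by
  have hpos : 0 < x ^ 4 + 4 * x ^ 2 := by positivity
  set s := Real.sqrt (x ^ 4 + 4 * x ^ 2) with hsdef
  have hs : 0 < s := Real.sqrt_pos.2 hpos
  have hs2 : s ^ 2 = x ^ 4 + 4 * x ^ 2 := Real.sq_sqrt hpos.le
  have hsx : x ^ 2 < s := by nlinarith
  have hslt : s < x ^ 2 + 2 := by nlinarith
  have hg : gMD x = (s - x ^ 2) / 2 := rfl
  have hg0 : 0 < gMD x := by rw [hg]; linarith
  have hg1 : gMD x < 1 := by rw [hg]; linarith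
  have hinner : HasDerivAt (fun y : ℝ => y ^ 4 + 4 * y ^ 2) (4 * x ^ 3 + 8 * x) x := by
    have := (hasDerivAt_pow 4 x).add ((hasDerivAt_pow 2 x).const_mul 4)
    exact this.congr_deriv (by norm_num; ring)
  have h1 : HasDerivAt (fun y : ℝ => Real.sqrt (y ^ 4 + 4 * y ^ 2))
      ((4 * x ^ 3 + 8 * x) / (2 * s)) x := hinner.sqrt hpos.ne'
  set g' : ℝ := ((4 * x ^ 3 + 8 * x) / (2 * s) - 2 * x) / 2 with hg'def
  have hgd : HasDerivAt gMD g' x := by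
    have h := (h1.sub (hasDerivAt_pow 2 x)).div_const 2
    have : HasDerivAt (fun y : ℝ => (Real.sqrt (y ^ 4 + 4 * y ^ 2) - y ^ 2) / 2)
        g' x := h.congr_deriv (by rw [hg'def]; norm_num)
    exact this
  have h2 : HasDerivAt (fun y => 1 - gMD y) (-g') x := by
    exact ((hasDerivAt_const x (1:ℝ)).sub hgd).congr_deriv (by simp)
  have hlog : HasDerivAt (fun y => Real.log (1 - gMD y)) (-g' / (1 - gMD x)) x :=
    h2.log (by linarith)
  have hp : HasDerivAt pMD (-(-g' / 2) - (1 / 2) * (-g' / (1 - gMD x))) x := by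
    have h := ((h2.div_const 2).neg).sub (hlog.const_mul (1 / 2))
    have : HasDerivAt (fun y : ℝ => -(1 - gMD y) / 2 - (1 / 2) * Real.log (1 - gMD y))
        (-(-g' / 2) - (1 / 2) * (-g' / (1 - gMD x))) x := by
      refine h.congr_of_eventuallyEq (Filter.Eventually.of_forall fun y => ?_)
      simp only [Pi.sub_apply, Pi.neg_apply]
      ring
    exact this
  refine ⟨_, hp, ?_⟩
  have h1g : (1 : ℝ) - gMD x ≠ 0 := by linarith
  rw [hg] at h1g
  rw [hg, hg'def]
  have hd : (2 : ℝ) - (s - x ^ 2) ≠ 0 := by nlinarith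
  field_simp [hs.ne', hd]
  linear_combination (-(4:ℝ) * (x ^ 2 + 2 - s)) * hs2
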